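/- Let X be a real-valued square-integrable random variable and let α, β > 0. The expectile-loss risk φ(t) = E[α·(max(X − t, 0))² + β·(max(t − X, 0))²] is differentiable in t, with derivative φ′(t) = 2β·G(t) − 2α·H(t), where G(t) = E[max(t − X, 0)] and H(t) = E[max(X − t, 0)]. -/

import Mathlib

open MeasureTheory

lemma sqMax_hasDerivAt (y : ℝ) : HasDerivAt (fun y : ℝ => max y 0 ^ 2) (2 * max y 0) y := by
  rcases lt_trichotomy y 0 with h | h | h
  · have : (fun y : ℝ => max y 0 ^ 2) =ᶠ[nhds y] fun _ => (0:ℝ) := by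
      filter_upwards [eventually_lt_nhds h] with z hz
      simp [max_eq_right hz.le]
    have h0 : HasDerivAt (fun _ : ℝ => (0:ℝ)) 0 y := hasDerivAt_const y 0
    simpa [max_eq_right h.le] using h0.congr_of_eventuallyEq this
  · subst h
    rw [hasDerivAt_iff_isLittleO]
    simp only [max_self, ne_eq, OfNat.ofNat_ne_zero, not_false_eq_true, zero_pow, mul_zero,
      sub_zero, smul_eq_mul, mul_zero]
    rw [Asymptotics.isLittleO_iff]
    intro c hc
    filter_upwards [Metric.eventually_nhds_iff.2 ⟨c, hc, fun {z} hz => hz⟩] with z hz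
    simp only [Real.norm_eq_abs, Real.dist_eq, sub_zero] at hz ⊢
    have h1 : |max z 0 ^ 2| = max z 0 ^ 2 := abs_of_nonneg (by positivity)
    have h2 : max z 0 ≤ |z| := max_le (le_abs_self z) (abs_nonneg z)
    calc |max z 0 ^ 2| = max z 0 * max z 0 := by rw [h1]; ring
    _ ≤ |z| * |z| := mul_le_mul h2 h2 (le_max_right _ _) (abs_nonneg z)
    _ ≤ c * |z| := by nlinarith [abs_nonneg z]
  · have : (fun y : ℝ => max y 0 ^ 2) =ᶠ[nhds y] fun z => z ^ 2 := by
      filter_upwards [eventually_gt_nhds h] with z hz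
      simp [max_eq_left hz.le]
    have h0 : HasDerivAt (fun z : ℝ => z ^ 2) (2 * y) y := by
      simpa using hasDerivAt_pow 2 y
    simpa [max_eq_left h.le] using h0.congr_of_eventuallyEq this

lemma pointwise_deriv (x a α β : ℝ) :
    HasDerivAt (fun t : ℝ => α * max (x - t) 0 ^ 2 + β * max (t - x) 0 ^ 2)
      (α * (2 * max (x - a) 0 * (-1)) + β * (2 * max (a - x) 0)) a := by
  have h1 : HasDerivAt (fun t : ℝ => x - t) (-1) a := (hasDerivAt_id a).const_sub x
  have h2 : HasDerivAt (fun t : ℝ => t - x) 1 a := (hasDerivAt_id a).sub_const x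
  have g1 := (sqMax_hasDerivAt (x - a)).comp a h1
  have g2 := (sqMax_hasDerivAt (a - x)).comp a h2
  refine ((g1.const_mul α).add ((g2.const_mul β))).congr_deriv ?_
  ring

/-- The expectile-loss risk φ is differentiable with
φ′(t) = 2β·G(t) − 2α·H(t). -/
theorem expectile_risk_deriv
    {Ω : Type*} [MeasurableSpace Ω] (μ : Measure Ω) [IsProbabilityMeasure μ]
    (X : Ω → ℝ) (hX : MemLp X 2 μ)
    (α β : ℝ) (hα : 0 < α) (hβ : 0 < β)
    (G H φ : ℝ → ℝ)
    (hG : ∀ t, G t = ∫ ω, max (t - X ω) 0 ∂μ)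
    (hH : ∀ t, H t = ∫ ω, max (X ω - t) 0 ∂μ)
    (hφ : ∀ t, φ t = ∫ ω, (α * (max (X ω - t) 0) ^ 2 + β * (max (t - X ω) 0) ^ 2) ∂μ) :
    ∀ t : ℝ, HasDerivAt φ (2 * β * G t - 2 * α * H t) t := by
  intro t
  have hXm : AEStronglyMeasurable X μ := hX.aestronglyMeasurable
  have hXint : Integrable X μ := hX.integrable one_le_two
  set F : ℝ → Ω → ℝ := fun x ω => α * max (X ω - x) 0 ^ 2 + β * max (x - X ω) 0 ^ 2 with hF
  set F' : ℝ → Ω → ℝ := fun x ω =>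
      α * (2 * max (X ω - x) 0 * (-1)) + β * (2 * max (x - X ω) 0) with hF'
  have hmeasF : ∀ x : ℝ, AEStronglyMeasurable (F x) μ := by
    intro x
    apply AEStronglyMeasurable.add
    · exact aestronglyMeasurable_const.mul
        (((hXm.sub aestronglyMeasurable_const).sup aestronglyMeasurable_const).pow 2)
    · exact aestronglyMeasurable_const.mul
        (((aestronglyMeasurable_const.sub hXm).sup aestronglyMeasurable_const).pow 2)
  have hmeasF' : ∀ x : ℝ, AEStronglyMeasurable (F' x) μ := by
    intro x
    apply AEStronglyMeasurable.add
    · exact aestronglyMeasurable_const.mul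
        (((aestronglyMeasurable_const.mul
          ((hXm.sub aestronglyMeasurable_const).sup aestronglyMeasurable_const)).mul
          aestronglyMeasurable_const))
    · exact aestronglyMeasurable_const.mul
        (aestronglyMeasurable_const.mul
          ((aestronglyMeasurable_const.sub hXm).sup aestronglyMeasurable_const))
  -- integrability of F t
  have habs2 : MemLp (fun ω => |X ω| + |t|) 2 μ :=
    hX.abs.add (memLp_const |t|)
  have hsq : Integrable (fun ω => (|X ω| + |t|) ^ 2) μ := habs2.integrable_sq
  have hFint : Integrable (F t) μ := by
    refine Integrable.mono' (hsq.const_mul (α + β)) (hmeasF t) ?_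
    filter_upwards with ω
    have h1 : max (X ω - t) 0 ≤ |X ω| + |t| := by
      apply max_le _ (by positivity)
      calc X ω - t ≤ |X ω - t| := le_abs_self _
        _ ≤ |X ω| + |t| := abs_sub _ _
    have h2 : max (t - X ω) 0 ≤ |X ω| + |t| := by
      apply max_le _ (by positivity)
      calc t - X ω ≤ |t - X ω| := le_abs_self _
        _ ≤ |t| + |X ω| := abs_sub _ _
        _ = |X ω| + |t| := by ring
    have hnn : (0:ℝ) ≤ |X ω| + |t| := by positivity
    have e1 : max (X ω - t) 0 ^ 2 ≤ (|X ω| + |t|) ^ 2 :=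
      pow_le_pow_left₀ (le_max_right _ _) h1 2
    have e2 : max (t - X ω) 0 ^ 2 ≤ (|X ω| + |t|) ^ 2 :=
      pow_le_pow_left₀ (le_max_right _ _) h2 2
    rw [Real.norm_eq_abs, abs_of_nonneg (by positivity)]
    calc α * max (X ω - t) 0 ^ 2 + β * max (t - X ω) 0 ^ 2
        ≤ α * (|X ω| + |t|) ^ 2 + β * (|X ω| + |t|) ^ 2 := by
          gcongr
      _ = (α + β) * (|X ω| + |t|) ^ 2 := by ring
  -- bound on derivative
  set bound : Ω → ℝ := fun ω => 2 * (α + β) * (|X ω| + |t| + 1) with hbound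
  have hbound_int : Integrable bound μ :=
    ((hXint.abs.add (integrable_const |t|)).add (integrable_const 1)).const_mul _
  have h_b : ∀ᵐ ω ∂μ, ∀ x ∈ Metric.ball t 1, ‖F' x ω‖ ≤ bound ω := by
    filter_upwards with ω x hx
    rw [Metric.mem_ball, Real.dist_eq] at hx
    have hx' : |x| ≤ |t| + 1 := by
      calc |x| = |t + (x - t)| := by ring_nf
        _ ≤ |t| + |x - t| := abs_add_le _ _
        _ ≤ |t| + 1 := by linarith
    have h1 : max (X ω - x) 0 ≤ |X ω| + (|t| + 1) := by
      apply max_le _ (by positivity)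
      calc X ω - x ≤ |X ω - x| := le_abs_self _
        _ ≤ |X ω| + |x| := abs_sub _ _
        _ ≤ |X ω| + (|t| + 1) := by linarith
    have h2 : max (x - X ω) 0 ≤ |X ω| + (|t| + 1) := by
      apply max_le _ (by positivity)
      calc x - X ω ≤ |x - X ω| := le_abs_self _
        _ ≤ |x| + |X ω| := abs_sub _ _
        _ ≤ |X ω| + (|t| + 1) := by linarith
    have hm1 : (0:ℝ) ≤ max (X ω - x) 0 := le_max_right _ _
    have hm2 : (0:ℝ) ≤ max (x - X ω) 0 := le_max_right _ _
    rw [Real.norm_eq_abs]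
    calc |α * (2 * max (X ω - x) 0 * (-1)) + β * (2 * max (x - X ω) 0)|
        ≤ |α * (2 * max (X ω - x) 0 * (-1))| + |β * (2 * max (x - X ω) 0)| := abs_add_le _ _
      _ = α * (2 * max (X ω - x) 0) + β * (2 * max (x - X ω) 0) := by
          rw [abs_of_nonpos (by nlinarith), abs_of_nonneg (by positivity)]; ring
      _ ≤ α * (2 * (|X ω| + (|t| + 1))) + β * (2 * (|X ω| + (|t| + 1))) := by gcongr
      _ = 2 * (α + β) * (|X ω| + |t| + 1) := by ring
  have h_d : ∀ᵐ ω ∂μ, ∀ x ∈ Metric.ball t 1, HasDerivAt (F · ω) (F' x ω) x := by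
    filter_upwards with ω x _
    exact pointwise_deriv (X ω) x α β
  have key := hasDerivAt_integral_of_dominated_loc_of_deriv_le (μ := μ) (F := F) (F' := F')
    (Metric.ball_mem_nhds t one_pos) (Filter.Eventually.of_forall hmeasF) hFint (hmeasF' t) h_b hbound_int h_d
  have hderiv := key.2
  -- integrability of each positive part
  have hI1 : Integrable (fun ω => max (X ω - t) 0) μ := by
    refine Integrable.mono' (hXint.abs.add (integrable_const |t|))
      ((hXm.sub aestronglyMeasurable_const).sup aestronglyMeasurable_const) ?_
    filter_upwards with ω
    rw [Real.norm_eq_abs, abs_of_nonneg (le_max_right _ _)]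
    apply max_le _ (by exact add_nonneg (abs_nonneg _) (abs_nonneg _))
    calc X ω - t ≤ |X ω - t| := le_abs_self _
      _ ≤ |X ω| + |t| := abs_sub _ _
  have hI2 : Integrable (fun ω => max (t - X ω) 0) μ := by
    refine Integrable.mono' (hXint.abs.add (integrable_const |t|))
      ((aestronglyMeasurable_const.sub hXm).sup aestronglyMeasurable_const) ?_
    filter_upwards with ω
    rw [Real.norm_eq_abs, abs_of_nonneg (le_max_right _ _)]
    apply max_le _ (by exact add_nonneg (abs_nonneg _) (abs_nonneg _))
    calc t - X ω ≤ |t - X ω| := le_abs_self _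
      _ ≤ |t| + |X ω| := abs_sub _ _
      _ = |X ω| + |t| := by ring
  have hval : ∫ ω, F' t ω ∂μ = 2 * β * G t - 2 * α * H t := by
    have : ∀ ω, F' t ω = (2 * β) * max (t - X ω) 0 - (2 * α) * max (X ω - t) 0 := by
      intro ω; simp only [hF']; ring
    rw [show (fun ω => F' t ω) = fun ω =>
        (2 * β) * max (t - X ω) 0 - (2 * α) * max (X ω - t) 0 from funext this]
    rw [integral_sub ((hI2.const_mul _)) ((hI1.const_mul _)),
      integral_const_mul, integral_const_mul, hG, hH]
  rw [← hval]
  have hφeq : φ = fun x => ∫ ω, F x ω ∂μ := funext hφ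
  rw [hφeq]
  exact hderiv
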